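/- arXiv:1505.03173 — 2 statements merged into one kernel-verified Lean document; each statement's English description precedes it below -/
import Mathlib

section
/- Let X = [0,1]^d, (u^n)_{n≥0} a (t,d)-sequence in base b ≥ 2, and K : X → P(X) a Markov kernel satisfying Assumptions A1 and A2 such that F_K, viewed as a function of (x,y) ∈ X², is Lipschitz for the supremum norm. For k ≥ t and x̃ ∈ X define the dispersion d_X(k, x̃) = sup_{x∈X} min_{0 ≤ n < b^k} ‖F_K^{-1}(x̃, u^n) − x‖_∞. Then there exist a constant C < ∞ and k_0 ∈ ℕ such that sup_{x̃∈X} d_X(k, x̃) ≤ C b^{-k/d} for all k ≥ k_0. -/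
open MeasureTheory ProbabilityTheory Set Filter
open scoped Classical

/-- The closed unit cube `[0,1]^d` in `ℝ^d` (modeled as `Fin d → ℝ` with the sup norm). -/
def cube (d : ℕ) : Set (Fin d → ℝ) := {x | ∀ i, x i ∈ Set.Icc (0:ℝ) 1}

/-- Membership in the `b`-ary box `∏_j [c_j b^{-e_j}, (c_j+1) b^{-e_j})`. -/
def inBaryBox {d : ℕ} (b : ℕ) (e c : Fin d → ℕ) (x : Fin d → ℝ) : Prop :=
  ∀ j, (c j : ℝ) / (b : ℝ) ^ (e j) ≤ x j ∧ x j < ((c j : ℝ) + 1) / (b : ℝ) ^ (e j)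

/-- The block `{u^n : A ≤ n < A + b^m}` is a `(t,m,d)`-net in base `b`: every `b`-ary box of
volume `b^{t-m}` contains exactly `b^t` points of the block. -/
def IsNetBlock {d : ℕ} (b t m : ℕ) (u : ℕ → Fin d → ℝ) (A : ℕ) : Prop :=
  ∀ e c : Fin d → ℕ, (∀ j, c j < b ^ (e j)) → (∑ j, e j) = m - t →
    ((Finset.Ico A (A + b ^ m)).filter (fun n => inBaryBox b e c (u n))).card = b ^ t

/-- `(u^n)_{n≥0}` is a `(t,d)`-sequence in base `b`. -/
def IsTSeq {d : ℕ} (b t : ℕ) (u : ℕ → Fin d → ℝ) : Prop :=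
  (∀ n i, u n i ∈ Set.Ico (0:ℝ) 1) ∧
  ∀ a m : ℕ, t ≤ m → IsNetBlock b t m u (a * b ^ m)

/-- `(v^n)_{n≥0}` is a scalar `(t,1)`-sequence in base `b`. -/
def IsTSeq1 (b t : ℕ) (v : ℕ → ℝ) : Prop :=
  (∀ n, v n ∈ Set.Ico (0:ℝ) 1) ∧
  ∀ a m : ℕ, t ≤ m → ∀ c : ℕ, c < b ^ (m - t) →
    ((Finset.Ico (a * b ^ m) (a * b ^ m + b ^ m)).filter
      (fun n => (c : ℝ) / (b:ℝ) ^ (m - t) ≤ v n ∧ v n < ((c : ℝ) + 1) / (b:ℝ) ^ (m - t))).card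
      = b ^ t

/-- `k_n`: the smallest integer `k` such that `n < b^k`. -/
noncomputable def kOf (b n : ℕ) : ℕ := sInf {k | n < b ^ k}

section Rosenblatt

variable {d : ℕ}

/-- Marginal of the density `κ(·|x)` over the first `i` coordinates: the first `i` coordinates
are fixed to those of `y`, the remaining ones are integrated out over the unit cube. -/
noncomputable def marg (κ : (Fin d → ℝ) → (Fin d → ℝ) → ℝ) (i : ℕ) (x y : Fin d → ℝ) : ℝ :=
  ∫ z in cube d, κ x (fun j => if (j : ℕ) < i then y j else z j)

/-- `K_i(y_i | y_{1:i-1}, x)`: the `i`-th conditional density of the kernel density `κ`. -/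
noncomputable def condDensity (κ : (Fin d → ℝ) → (Fin d → ℝ) → ℝ) (i : Fin d)
    (x y : Fin d → ℝ) : ℝ :=
  marg κ ((i : ℕ) + 1) x y / marg κ (i : ℕ) x y

/-- `F_{K_i}(s | x, y_{1:i-1})`: the `i`-th conditional CDF of the kernel density `κ`. -/
noncomputable def condCDF' (κ : (Fin d → ℝ) → (Fin d → ℝ) → ℝ) (i : Fin d)
    (x y : Fin d → ℝ) (s : ℝ) : ℝ :=
  ∫ r in (0:ℝ)..s, condDensity κ i x (Function.update y i r)

/-- The Rosenblatt transform `F_K(x,·)` of the kernel with density `κ`. -/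
noncomputable def Ros (κ : (Fin d → ℝ) → (Fin d → ℝ) → ℝ) (x y : Fin d → ℝ) : Fin d → ℝ :=
  fun i => condCDF' κ i x y (y i)

/-- Assumption (A1): each conditional CDF is strictly increasing in its main argument. -/
def A1 (κ : (Fin d → ℝ) → (Fin d → ℝ) → ℝ) : Prop :=
  ∀ x ∈ cube d, ∀ y ∈ cube d, ∀ i : Fin d,
    StrictMonoOn (fun s => condCDF' κ i x y s) (Set.Icc (0:ℝ) 1)

/-- Assumption (A2): the density `κ` is continuous on `X²` and bounded below by `Klow > 0`. -/
def A2 (κ : (Fin d → ℝ) → (Fin d → ℝ) → ℝ) (Klow : ℝ) : Prop :=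
  ContinuousOn (fun p : (Fin d → ℝ) × (Fin d → ℝ) => κ p.1 p.2) ((cube d) ×ˢ (cube d)) ∧
  0 < Klow ∧ ∀ x ∈ cube d, ∀ y ∈ cube d, Klow ≤ κ x y

/-- `κ` is a probability density in its second argument, w.r.t. Lebesgue measure on the cube. -/
def IsMarkovDensity (κ : (Fin d → ℝ) → (Fin d → ℝ) → ℝ) : Prop :=
  ∀ x ∈ cube d, (∀ y ∈ cube d, 0 ≤ κ x y) ∧ ∫ y in cube d, κ x y = 1

/-- `G` is the inverse Rosenblatt transform associated with `κ`. -/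
def IsInvRos (κ : (Fin d → ℝ) → (Fin d → ℝ) → ℝ)
    (G : (Fin d → ℝ) → (Fin d → ℝ) → (Fin d → ℝ)) : Prop :=
  ∀ x ∈ cube d, ∀ u : Fin d → ℝ, (∀ i, u i ∈ Set.Icc (0:ℝ) 1) →
    G x u ∈ cube d ∧ Ros κ x (G x u) = u

/-- The sup-norm ball `B_δ(x)` of radius `δ` around `x`, intersected with the cube. -/
def ball' {d : ℕ} (δ : ℝ) (x : Fin d → ℝ) : Set (Fin d → ℝ) :=
  {y ∈ cube d | ‖y - x‖ ≤ δ}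

end Rosenblatt

section DispersionAux

section A
variable {d : ℕ}

lemma cube_eq (d : ℕ) : cube d = Set.pi Set.univ (fun _ : Fin d => Icc (0:ℝ) 1) := by
  ext x; simp [cube, Set.mem_pi, Pi.le_def, forall_and]

lemma isCompact_cube : IsCompact (cube d) := by
  rw [cube_eq]; exact isCompact_univ_pi (fun _ => isCompact_Icc)

lemma measurableSet_cube : MeasurableSet (cube d) := by
  rw [cube_eq]; exact MeasurableSet.univ_pi (fun _ => measurableSet_Icc)

lemma volume_cube : volume (cube d) = 1 := by
  rw [cube_eq, volume_pi_pi]; simp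

lemma cube_nonempty : (cube d).Nonempty := ⟨fun _ => 0, fun _ => by simp⟩

lemma update_mem_cube {y : Fin d → ℝ} (hy : y ∈ cube d) (i : Fin d) {r : ℝ}
    (hr : r ∈ Icc (0:ℝ) 1) : Function.update y i r ∈ cube d := by
  intro j
  rcases eq_or_ne j i with h | h
  · subst h; simpa using hr
  · rw [Function.update_of_ne h]; exact hy j

/-- the mixing map -/
def mix (i : ℕ) (y z : Fin d → ℝ) : Fin d → ℝ := fun j => if (j : ℕ) < i then y j else z j

lemma marg_eq (κ : (Fin d → ℝ) → (Fin d → ℝ) → ℝ) (i : ℕ) (x y : Fin d → ℝ) :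
    marg κ i x y = ∫ z in cube d, κ x (mix i y z) := rfl

lemma mix_mem_cube {i : ℕ} {y z : Fin d → ℝ} (hy : y ∈ cube d) (hz : z ∈ cube d) :
    mix i y z ∈ cube d := by
  intro j; by_cases h : (j : ℕ) < i <;> simp only [mix, h, if_true, if_false] <;>
    [exact hy j; exact hz j]

lemma continuous_mix (i : ℕ) (y : Fin d → ℝ) : Continuous (fun z => mix i y z) := by
  refine continuous_pi fun j => ?_
  by_cases h : (j : ℕ) < i <;> simp only [mix, h, if_true, if_false]
  · exact continuous_const
  · exact continuous_apply j

variable {κ : (Fin d → ℝ) → (Fin d → ℝ) → ℝ} {Klow M : ℝ}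
  (hA2 : A2 κ Klow) (hM : ∀ x ∈ cube d, ∀ y ∈ cube d, κ x y ≤ M)

include hA2

lemma contOn_mix {i : ℕ} {x y : Fin d → ℝ} (hx : x ∈ cube d) (hy : y ∈ cube d) :
    ContinuousOn (fun z => κ x (mix i y z)) (cube d) := by
  have h1 : Continuous (fun z : Fin d → ℝ => ((x, mix i y z) : (Fin d → ℝ) × (Fin d → ℝ))) :=
    continuous_const.prodMk (continuous_mix i y)
  exact hA2.1.comp h1.continuousOn (fun z hz => ⟨hx, mix_mem_cube hy hz⟩)

lemma integrableOn_mix {i : ℕ} {x y : Fin d → ℝ} (hx : x ∈ cube d) (hy : y ∈ cube d) :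
    IntegrableOn (fun z => κ x (mix i y z)) (cube d) := by
  exact (contOn_mix hA2 hx hy).integrableOn_compact isCompact_cube

lemma marg_lb {i : ℕ} {x y : Fin d → ℝ} (hx : x ∈ cube d) (hy : y ∈ cube d) :
    Klow ≤ marg κ i x y := by
  rw [marg_eq]
  have h0 : Klow = ∫ _z in cube d, Klow := by
    rw [setIntegral_const, measureReal_def, volume_cube]; simp
  rw [h0]
  refine setIntegral_mono_on (integrableOn_const ?_) (integrableOn_mix hA2 hx hy)
    measurableSet_cube (fun z hz => hA2.2.2 x hx _ (mix_mem_cube hy hz))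
  rw [volume_cube]; exact ENNReal.one_ne_top

include hM in
lemma marg_ub {i : ℕ} {x y : Fin d → ℝ} (hx : x ∈ cube d) (hy : y ∈ cube d) :
    marg κ i x y ≤ M := by
  rw [marg_eq]
  have h0 : M = ∫ _z in cube d, M := by rw [setIntegral_const, measureReal_def, volume_cube]; simp
  rw [h0]
  refine setIntegral_mono_on (integrableOn_mix hA2 hx hy) (integrableOn_const ?_)
    measurableSet_cube (fun z hz => hM x hx _ (mix_mem_cube hy hz))
  rw [volume_cube]; exact ENNReal.one_ne_top

omit hA2 in
lemma marg_congr {i : ℕ} {x y y' : Fin d → ℝ} (h : ∀ j : Fin d, (j : ℕ) < i → y j = y' j) :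
    marg κ i x y = marg κ i x y' := by
  rw [marg_eq, marg_eq]
  refine setIntegral_congr_fun measurableSet_cube (fun z _ => ?_)
  congr 1
  funext j
  by_cases hj : (j : ℕ) < i <;> simp only [mix, hj, if_true, if_false]
  exact h j hj

end A

section C
variable {d : ℕ}
variable {κ : (Fin d → ℝ) → (Fin d → ℝ) → ℝ} {Klow M : ℝ}
  (hA2 : A2 κ Klow) (hM : ∀ x ∈ cube d, ∀ y ∈ cube d, κ x y ≤ M)

include hA2 hM

lemma Klow_le_M : Klow ≤ M := by
  obtain ⟨x, hx⟩ := cube_nonempty (d := d)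
  exact (hA2.2.2 x hx x hx).trans (hM x hx x hx)

lemma M_pos : 0 < M := lt_of_lt_of_le hA2.2.1 (Klow_le_M hA2 hM)

lemma condDensity_lb {i : Fin d} {x y : Fin d → ℝ} (hx : x ∈ cube d) (hy : y ∈ cube d) :
    Klow / M ≤ condDensity κ i x y := by
  have hMpos := M_pos hA2 hM
  have h1 : Klow ≤ marg κ ((i:ℕ)+1) x y := marg_lb hA2 hx hy
  have h2 : marg κ (i:ℕ) x y ≤ M := marg_ub hA2 hM hx hy
  have h3 : 0 < marg κ (i:ℕ) x y := lt_of_lt_of_le hA2.2.1 (marg_lb hA2 hx hy)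
  rw [condDensity, div_le_div_iff₀ hMpos h3]
  calc Klow * marg κ (i:ℕ) x y ≤ Klow * M := by
        exact mul_le_mul_of_nonneg_left h2 hA2.2.1.le
    _ ≤ marg κ ((i:ℕ)+1) x y * M := by
        exact mul_le_mul_of_nonneg_right h1 hMpos.le

lemma condDensity_ub {i : Fin d} {x y : Fin d → ℝ} (hx : x ∈ cube d) (hy : y ∈ cube d) :
    condDensity κ i x y ≤ M / Klow := by
  have h1 : marg κ ((i:ℕ)+1) x y ≤ M := marg_ub hA2 hM hx hy
  have h2 : Klow ≤ marg κ (i:ℕ) x y := marg_lb hA2 hx hy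
  have h3 : 0 < marg κ (i:ℕ) x y := lt_of_lt_of_le hA2.2.1 h2
  rw [condDensity, div_le_div_iff₀ h3 hA2.2.1]
  calc marg κ ((i:ℕ)+1) x y * Klow ≤ M * Klow := mul_le_mul_of_nonneg_right h1 hA2.2.1.le
    _ ≤ M * marg κ (i:ℕ) x y := mul_le_mul_of_nonneg_left h2 (M_pos hA2 hM).le

omit hM in
/-- continuity of the numerator of the conditional density as a function of the updated
coordinate -/
lemma contOn_margNum {i : Fin d} {x y : Fin d → ℝ} (hx : x ∈ cube d) (hy : y ∈ cube d) :
    ContinuousOn (fun r => marg κ ((i:ℕ)+1) x (Function.update y i r)) (Icc (0:ℝ) 1) := by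
  have hMb : ∃ Mb : ℝ, ∀ p ∈ (cube d) ×ˢ (cube d),
      ‖(fun p : (Fin d → ℝ) × (Fin d → ℝ) => κ p.1 p.2) p‖ ≤ Mb :=
    (isCompact_cube.prod isCompact_cube).exists_bound_of_continuousOn hA2.1
  obtain ⟨Mb, hMb⟩ := hMb
  simp only [marg_eq]
  refine continuousOn_of_dominated (bound := fun _ => Mb) ?_ ?_ ?_ ?_
  · intro r hr
    exact ((contOn_mix hA2 hx (update_mem_cube hy i hr)).aestronglyMeasurable measurableSet_cube)
  · intro r hr
    rw [ae_restrict_iff' measurableSet_cube]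
    filter_upwards with z hz
    exact hMb (x, mix ((i:ℕ)+1) (Function.update y i r) z)
      ⟨hx, mix_mem_cube (update_mem_cube hy i hr) hz⟩
  · exact integrableOn_const (by rw [volume_cube]; exact ENNReal.one_ne_top)
  · rw [ae_restrict_iff' measurableSet_cube]
    filter_upwards with z hz
    have h1 : Continuous (fun r : ℝ =>
        ((x, mix ((i:ℕ)+1) (Function.update y i r) z) : (Fin d → ℝ) × (Fin d → ℝ))) := by
      refine continuous_const.prodMk (continuous_pi fun j => ?_)
      by_cases hj : (j : ℕ) < (i:ℕ)+1 <;> simp only [mix, hj, if_true, if_false]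
      · rcases eq_or_ne j i with h | h
        · subst h; simp only [Function.update_self]; exact continuous_id
        · simp only [Function.update_of_ne h]; exact continuous_const
      · exact continuous_const
    refine hA2.1.comp h1.continuousOn (fun r hr => ⟨hx, mix_mem_cube (update_mem_cube hy i hr) hz⟩)

end C

section D
variable {d : ℕ}
variable {κ : (Fin d → ℝ) → (Fin d → ℝ) → ℝ} {Klow M : ℝ}
  (hA2 : A2 κ Klow) (hM : ∀ x ∈ cube d, ∀ y ∈ cube d, κ x y ≤ M)

include hA2

lemma marg_update_eq {i : Fin d} (x y : Fin d → ℝ) (r : ℝ) :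
    marg κ (i:ℕ) x (Function.update y i r) = marg κ (i:ℕ) x y := by
  refine marg_congr (fun j hj => ?_)
  exact Function.update_of_ne (by rintro rfl; exact lt_irrefl _ hj) _ _

lemma condDensity_update_eq {i : Fin d} (x y : Fin d → ℝ) (r : ℝ) :
    condDensity κ i x (Function.update y i r)
      = marg κ ((i:ℕ)+1) x (Function.update y i r) / marg κ (i:ℕ) x y := by
  rw [condDensity, marg_update_eq (κ := κ) hA2]

lemma contOn_condDensity {i : Fin d} {x y : Fin d → ℝ} (hx : x ∈ cube d) (hy : y ∈ cube d) :
    ContinuousOn (fun r => condDensity κ i x (Function.update y i r)) (Icc (0:ℝ) 1) := by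
  have h := (contOn_margNum hA2 hx hy (i := i)).div_const (marg κ (i:ℕ) x y)
  refine h.congr (fun r _ => ?_)
  exact condDensity_update_eq hA2 x y r

lemma intervalIntegrable_condDensity {i : Fin d} {x y : Fin d → ℝ} (hx : x ∈ cube d)
    (hy : y ∈ cube d) {a b : ℝ} (ha : a ∈ Icc (0:ℝ) 1) (hb : b ∈ Icc (0:ℝ) 1) :
    IntervalIntegrable (fun r => condDensity κ i x (Function.update y i r)) volume a b := by
  refine ((contOn_condDensity hA2 hx hy).mono ?_).intervalIntegrable
  exact uIcc_subset_Icc ha hb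

lemma condCDF'_sub_eq {i : Fin d} {x y : Fin d → ℝ} (hx : x ∈ cube d) (hy : y ∈ cube d)
    {s' s : ℝ} (hs' : s' ∈ Icc (0:ℝ) 1) (hs : s ∈ Icc (0:ℝ) 1) :
    condCDF' κ i x y s - condCDF' κ i x y s'
      = ∫ r in s'..s, condDensity κ i x (Function.update y i r) := by
  rw [condCDF', condCDF']
  rw [← intervalIntegral.integral_add_adjacent_intervals
    (intervalIntegrable_condDensity hA2 hx hy (by simp) hs')
    (intervalIntegrable_condDensity hA2 hx hy hs' hs)]
  ring

include hM in
lemma condCDF'_slope {i : Fin d} {x y : Fin d → ℝ} (hx : x ∈ cube d) (hy : y ∈ cube d)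
    {s' s : ℝ} (hs' : s' ∈ Icc (0:ℝ) 1) (hs : s ∈ Icc (0:ℝ) 1) (hss : s' ≤ s) :
    Klow / M * (s - s') ≤ condCDF' κ i x y s - condCDF' κ i x y s' := by
  rw [condCDF'_sub_eq hA2 hx hy hs' hs]
  have h0 : Klow / M * (s - s') = ∫ _r in s'..s, Klow / M := by
    rw [intervalIntegral.integral_const, smul_eq_mul]; ring
  rw [h0]
  refine intervalIntegral.integral_mono_on hss (intervalIntegrable_const)
    (intervalIntegrable_condDensity hA2 hx hy hs' hs) (fun r hr => ?_)
  have hr' : r ∈ Icc (0:ℝ) 1 := ⟨hs'.1.trans hr.1, hr.2.trans hs.2⟩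
  exact condDensity_lb hA2 hM hx (update_mem_cube hy i hr')

omit hA2 in
lemma condCDF'_zero {i : Fin d} (x y : Fin d → ℝ) : condCDF' κ i x y 0 = 0 := by
  rw [condCDF', intervalIntegral.integral_same]

omit hA2 in
lemma condCDF'_congr {i : Fin d} {x y y' : Fin d → ℝ}
    (h : ∀ j : Fin d, (j : ℕ) < (i:ℕ) → y j = y' j) (s : ℝ) :
    condCDF' κ i x y s = condCDF' κ i x y' s := by
  rw [condCDF', condCDF']
  refine intervalIntegral.integral_congr (fun r _ => ?_)
  have h1 : marg κ ((i:ℕ)+1) x (Function.update y i r)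
      = marg κ ((i:ℕ)+1) x (Function.update y' i r) := by
    refine marg_congr (fun j hj => ?_)
    rcases eq_or_ne j i with rfl | hne
    · simp
    · rw [Function.update_of_ne hne, Function.update_of_ne hne]
      refine h j ?_
      rcases Nat.lt_succ_iff_lt_or_eq.1 hj with h' | h'
      · exact h'
      · exact absurd (Fin.val_injective h') hne
  have h2 : marg κ (i:ℕ) x (Function.update y i r)
      = marg κ (i:ℕ) x (Function.update y' i r) := by
    refine marg_congr (fun j hj => ?_)
    have hne : j ≠ i := by rintro rfl; exact lt_irrefl _ hj
    rw [Function.update_of_ne hne, Function.update_of_ne hne]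
    exact h j hj
  simp only [condDensity, h1, h2]

end D

section E

lemma continuous_insertNth {n : ℕ} (i : Fin (n+1)) :
    Continuous (fun p : ℝ × (Fin n → ℝ) => (i.insertNth p.1 p.2 : Fin (n+1) → ℝ)) := by
  refine continuous_pi fun j => ?_
  rcases eq_or_ne j i with rfl | hne
  · simpa using continuous_fst
  · obtain ⟨k, rfl⟩ := Fin.exists_succAbove_eq hne
    simp only [Fin.insertNth_apply_succAbove]; exact (continuous_apply k).comp continuous_snd

lemma insertNth_mem_cube {n : ℕ} (i : Fin (n+1)) {r : ℝ} {z : Fin n → ℝ}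
    (hr : r ∈ Icc (0:ℝ) 1) (hz : z ∈ cube n) : i.insertNth r z ∈ cube (n+1) := by
  intro j
  rcases eq_or_ne j i with rfl | hne
  · simpa using hr
  · obtain ⟨k, rfl⟩ := Fin.exists_succAbove_eq hne
    simpa using hz k

lemma setIntegral_cube_eq {n : ℕ} (i : Fin (n+1)) (f : (Fin (n+1) → ℝ) → ℝ)
    (hf : ContinuousOn f (cube (n+1))) :
    ∫ z in cube (n+1), f z
      = ∫ r in Icc (0:ℝ) 1, ∫ z in cube n, f (i.insertNth r z) := by
  classical
  set e := MeasurableEquiv.piFinSuccAbove (fun _ : Fin (n+1) => ℝ) i with he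
  have hmp : MeasurePreserving e.symm volume volume :=
    (volume_preserving_piFinSuccAbove (fun _ : Fin (n+1) => ℝ) i).symm
  have hesymm : ∀ p : ℝ × (Fin n → ℝ), e.symm p = i.insertNth p.1 p.2 := fun p => rfl
  have hpre : e.symm ⁻¹' (cube (n+1)) = (Icc (0:ℝ) 1) ×ˢ (cube n) := by
    ext p
    simp only [mem_preimage, hesymm, Set.mem_prod]
    constructor
    · intro h
      refine ⟨by simpa using h i, fun k => by simpa using h (i.succAbove k)⟩
    · intro ⟨h1, h2⟩
      exact insertNth_mem_cube i h1 h2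
  have key := hmp.setIntegral_preimage_emb e.symm.measurableEmbedding f (cube (n+1))
  rw [hpre] at key
  rw [← key]
  have hInt : IntegrableOn (fun p : ℝ × (Fin n → ℝ) => f (i.insertNth p.1 p.2))
      ((Icc (0:ℝ) 1) ×ˢ (cube n)) (volume.prod volume) := by
    rw [← Measure.volume_eq_prod]
    refine ContinuousOn.integrableOn_compact (isCompact_Icc.prod isCompact_cube) ?_
    refine hf.comp (continuous_insertNth i).continuousOn ?_
    rintro ⟨r, z⟩ ⟨hr, hz⟩
    exact insertNth_mem_cube i hr hz
  rw [show (volume : Measure (ℝ × (Fin n → ℝ))) = volume.prod volume from Measure.volume_eq_prod _ _]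
  exact setIntegral_prod _ hInt

lemma integral_update_cube {n : ℕ} (i : Fin (n+1)) (F : (Fin (n+1) → ℝ) → ℝ)
    (hF : ContinuousOn F (cube (n+1))) :
    ∫ r in (0:ℝ)..1, ∫ z in cube (n+1), F (Function.update z i r)
      = ∫ z in cube (n+1), F z := by
  have hstep : ∀ r ∈ Icc (0:ℝ) 1,
      ∫ z in cube (n+1), F (Function.update z i r) = ∫ z in cube n, F (i.insertNth r z) := by
    intro r hr
    have hFr : ContinuousOn (fun w => F (Function.update w i r)) (cube (n+1)) := by
      have hc : Continuous (fun w : Fin (n+1) → ℝ => Function.update w i r) := by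
        refine continuous_pi fun j => ?_
        rcases eq_or_ne j i with rfl | hne
        · simpa using continuous_const
        · simp only [Function.update_of_ne hne]; exact continuous_apply j
      refine hF.comp hc.continuousOn (fun w hw => update_mem_cube hw i hr)
    rw [setIntegral_cube_eq i _ hFr]
    have : ∀ r' ∈ Icc (0:ℝ) 1, ∫ z in cube n, F (Function.update (i.insertNth r' z) i r)
        = ∫ z in cube n, F (i.insertNth r z) := by
      intro r' _
      refine setIntegral_congr_fun measurableSet_cube (fun z _ => ?_)
      rw [Fin.update_insertNth]
    rw [setIntegral_congr_fun measurableSet_Icc this, setIntegral_const]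
    simp
  have h0 : (0:ℝ) ≤ 1 := zero_le_one
  rw [intervalIntegral.integral_of_le h0, ← integral_Icc_eq_integral_Ioc]
  rw [setIntegral_congr_fun measurableSet_Icc hstep]
  rw [setIntegral_cube_eq i F hF]

end E

section F
variable {d : ℕ}
variable {κ : (Fin d → ℝ) → (Fin d → ℝ) → ℝ} {Klow M : ℝ}
  (hA2 : A2 κ Klow) (hM : ∀ x ∈ cube d, ∀ y ∈ cube d, κ x y ≤ M)

lemma mix_succ_update (i : Fin d) (y z : Fin d → ℝ) (r : ℝ) :
    mix ((i:ℕ)+1) (Function.update y i r) z = mix (i:ℕ) y (Function.update z i r) := by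
  funext j
  rcases eq_or_ne j i with rfl | hne
  · simp [mix]
  · have hv : (j:ℕ) ≠ (i:ℕ) := fun h => hne (Fin.val_injective h)
    by_cases hj : (j:ℕ) < (i:ℕ)
    · simp [mix, hj, Nat.lt_succ_of_lt hj, Function.update_of_ne hne]
    · have hj' : ¬ (j:ℕ) < (i:ℕ)+1 := by omega
      simp [mix, hj, hj', Function.update_of_ne hne]

include hA2

lemma condCDF'_one {i : Fin d} {x y : Fin d → ℝ} (hx : x ∈ cube d) (hy : y ∈ cube d) :
    condCDF' κ i x y 1 = 1 := by
  have hd : d ≠ 0 := fun h => (h ▸ i).elim0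
  obtain ⟨n, rfl⟩ := Nat.exists_eq_succ_of_ne_zero hd
  have hA : 0 < marg κ (i:ℕ) x y := lt_of_lt_of_le hA2.2.1 (marg_lb hA2 hx hy)
  have h1 : condCDF' κ i x y 1
      = (∫ r in (0:ℝ)..1, marg κ ((i:ℕ)+1) x (Function.update y i r)) / marg κ (i:ℕ) x y := by
    rw [condCDF', ← intervalIntegral.integral_div]
    exact intervalIntegral.integral_congr (fun r _ => condDensity_update_eq hA2 x y r)
  have h2 : ∫ r in (0:ℝ)..1, marg κ ((i:ℕ)+1) x (Function.update y i r)
      = marg κ (i:ℕ) x y := by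
    have h3 : ∀ r : ℝ, marg κ ((i:ℕ)+1) x (Function.update y i r)
        = ∫ z in cube (n+1), (fun w => κ x (mix (i:ℕ) y w)) (Function.update z i r) := by
      intro r
      rw [marg_eq]
      refine setIntegral_congr_fun measurableSet_cube (fun z _ => ?_)
      rw [mix_succ_update]
    calc ∫ r in (0:ℝ)..1, marg κ ((i:ℕ)+1) x (Function.update y i r)
        = ∫ r in (0:ℝ)..1, ∫ z in cube (n+1),
            (fun w => κ x (mix (i:ℕ) y w)) (Function.update z i r) :=
          intervalIntegral.integral_congr (fun r _ => h3 r)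
      _ = ∫ z in cube (n+1), κ x (mix (i:ℕ) y z) :=
          integral_update_cube i _ (contOn_mix hA2 hx hy)
      _ = marg κ (i:ℕ) x y := (marg_eq κ _ x y).symm
  rw [h1, h2, div_self (ne_of_gt hA)]

include hM in
lemma condCDF'_mem {i : Fin d} {x y : Fin d → ℝ} (hx : x ∈ cube d) (hy : y ∈ cube d)
    {s : ℝ} (hs : s ∈ Icc (0:ℝ) 1) : condCDF' κ i x y s ∈ Icc (0:ℝ) 1 := by
  have hρ : 0 < Klow / M := div_pos hA2.2.1 (M_pos hA2 hM)
  constructor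
  · have := condCDF'_slope hA2 hM (i := i) hx hy (s' := 0) (s := s) (by simp) hs hs.1
    rw [condCDF'_zero] at this
    nlinarith [hs.1]
  · have := condCDF'_slope hA2 hM (i := i) hx hy (s' := s) (s := 1) hs (by simp) hs.2
    rw [condCDF'_one hA2 hx hy] at this
    nlinarith [hs.2]

end F

section G
variable {d : ℕ}
variable {κ : (Fin d → ℝ) → (Fin d → ℝ) → ℝ} {Klow M CK : ℝ}
  (hA2 : A2 κ Klow) (hM : ∀ x ∈ cube d, ∀ y ∈ cube d, κ x y ≤ M)
  (hCK : 0 < CK)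
  (hLip : ∀ x ∈ cube d, ∀ y ∈ cube d, ∀ x' ∈ cube d, ∀ y' ∈ cube d,
      ‖Ros κ x y - Ros κ x' y'‖ ≤ CK * max ‖x - x'‖ ‖y - y'‖)

include hA2 hM hCK hLip

omit hCK hLip in
lemma Ros_mem {x y : Fin d → ℝ} (hx : x ∈ cube d) (hy : y ∈ cube d) (i : Fin d) :
    Ros κ x y i ∈ Icc (0:ℝ) 1 :=
  condCDF'_mem hA2 hM hx hy (hy i)

lemma invLip_step {x y y' : Fin d → ℝ} (hx : x ∈ cube d) (hy : y ∈ cube d) (hy' : y' ∈ cube d)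
    (i : Fin d) {B : ℝ} (hB : 0 ≤ B)
    (hprefix : ∀ j : Fin d, (j:ℕ) < (i:ℕ) → |y j - y' j| ≤ B) :
    |y i - y' i| ≤ (M / Klow) * (‖Ros κ x y - Ros κ x y'‖ + CK * B) := by
  classical
  have hKl : 0 < Klow := hA2.2.1
  have hMpos : 0 < M := M_pos hA2 hM
  have hρ : 0 < Klow / M := div_pos hKl hMpos
  set y'' : Fin d → ℝ := fun j => if (j:ℕ) < (i:ℕ) then y j else y' j with hy''def
  have hy'' : y'' ∈ cube d := by
    intro j; by_cases h : (j:ℕ) < (i:ℕ) <;> simp only [hy''def, h, if_true, if_false] <;>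
      [exact hy j; exact hy' j]
  have h1 : Ros κ x y'' i = condCDF' κ i x y (y' i) := by
    have hyi : y'' i = y' i := by simp [hy''def]
    rw [Ros, hyi]
    exact condCDF'_congr (fun j hj => by
      show (if (j:ℕ) < (i:ℕ) then y j else y' j) = y j
      exact if_pos hj) (y' i)
  have h2 : |Ros κ x y'' i - Ros κ x y' i| ≤ CK * B := by
    have hl := hLip x hx y'' hy'' x hx y' hy'
    rw [sub_self, norm_zero, max_eq_right (norm_nonneg _)] at hl
    have hnorm : ‖y'' - y'‖ ≤ B := by
      refine (pi_norm_le_iff_of_nonneg hB).2 (fun j => ?_)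
      rw [Pi.sub_apply, Real.norm_eq_abs]
      by_cases h : (j:ℕ) < (i:ℕ)
      · simp only [hy''def, h, if_true]; exact hprefix j h
      · simp only [hy''def, h, if_false, sub_self, abs_zero]; exact hB
    calc |Ros κ x y'' i - Ros κ x y' i| = ‖(Ros κ x y'' - Ros κ x y') i‖ := by
          rw [Pi.sub_apply, Real.norm_eq_abs]
      _ ≤ ‖Ros κ x y'' - Ros κ x y'‖ := norm_le_pi_norm _ i
      _ ≤ CK * ‖y'' - y'‖ := hl
      _ ≤ CK * B := mul_le_mul_of_nonneg_left hnorm hCK.le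
  have h3 : Klow / M * |y i - y' i|
      ≤ |condCDF' κ i x y (y i) - condCDF' κ i x y (y' i)| := by
    rcases le_total (y' i) (y i) with h | h
    · have hs := condCDF'_slope hA2 hM (i := i) hx hy (hy' i) (hy i) h
      rw [abs_of_nonneg (sub_nonneg.2 h)]
      exact hs.trans (le_abs_self _)
    · have hs := condCDF'_slope hA2 hM (i := i) hx hy (hy i) (hy' i) h
      rw [abs_of_nonpos (sub_nonpos.2 h), abs_sub_comm]
      have : -(y i - y' i) = y' i - y i := by ring
      rw [this]
      exact hs.trans (le_abs_self _)
  have h4 : |condCDF' κ i x y (y i) - condCDF' κ i x y (y' i)|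
      ≤ ‖Ros κ x y - Ros κ x y'‖ + CK * B := by
    have he : condCDF' κ i x y (y i) = Ros κ x y i := rfl
    rw [he, ← h1]
    calc |Ros κ x y i - Ros κ x y'' i|
        ≤ |Ros κ x y i - Ros κ x y' i| + |Ros κ x y' i - Ros κ x y'' i| := abs_sub_le _ _ _
      _ ≤ ‖Ros κ x y - Ros κ x y'‖ + CK * B := by
          refine add_le_add ?_ (by rwa [abs_sub_comm])
          calc |Ros κ x y i - Ros κ x y' i| = ‖(Ros κ x y - Ros κ x y') i‖ := by
                rw [Pi.sub_apply, Real.norm_eq_abs]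
            _ ≤ ‖Ros κ x y - Ros κ x y'‖ := norm_le_pi_norm _ i
  have h5 : Klow / M * |y i - y' i| ≤ ‖Ros κ x y - Ros κ x y'‖ + CK * B := h3.trans h4
  calc |y i - y' i| = (M / Klow) * (Klow / M * |y i - y' i|) := by
        field_simp
    _ ≤ (M / Klow) * (‖Ros κ x y - Ros κ x y'‖ + CK * B) :=
        mul_le_mul_of_nonneg_left h5 (div_pos hMpos hKl).le

lemma invLip {x y y' : Fin d → ℝ} (hx : x ∈ cube d) (hy : y ∈ cube d) (hy' : y' ∈ cube d) :
    ∀ i : Fin d, |y i - y' i|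
      ≤ (M / Klow) * (1 + (M / Klow) * CK) ^ (i:ℕ) * ‖Ros κ x y - Ros κ x y'‖ := by
  have hKl : 0 < Klow := hA2.2.1
  have hMpos : 0 < M := M_pos hA2 hM
  set c := M / Klow with hc
  have hc1 : 1 ≤ c := (one_le_div hKl).2 (Klow_le_M hA2 hM)
  set ε := ‖Ros κ x y - Ros κ x y'‖ with hε
  have hεnn : 0 ≤ ε := norm_nonneg _
  have hbase : 1 ≤ 1 + c * CK := by nlinarith
  suffices H : ∀ m : ℕ, ∀ i : Fin d, (i:ℕ) ≤ m → |y i - y' i| ≤ c * (1 + c * CK) ^ (i:ℕ) * ε by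
    exact fun i => H (i:ℕ) i le_rfl
  intro m
  induction m with
  | zero =>
    intro i hi
    have h0 : (i:ℕ) = 0 := Nat.le_zero.1 hi
    have := invLip_step hA2 hM hCK hLip hx hy hy' i (B := 0) le_rfl
      (fun j hj => by omega)
    rw [h0]
    calc |y i - y' i| ≤ c * (ε + CK * 0) := this
      _ = c * (1 + c * CK) ^ 0 * ε := by ring
  | succ m ih =>
    intro i hi
    rcases Nat.lt_succ_iff_lt_or_eq.1 (Nat.lt_succ_of_le hi) with h | h
    · exact ih i (Nat.lt_succ_iff.1 h)
    · set B := c * (1 + c * CK) ^ m * ε with hB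
      have hBnn : 0 ≤ B := by positivity
      have hpre : ∀ j : Fin d, (j:ℕ) < (i:ℕ) → |y j - y' j| ≤ B := by
        intro j hj
        have hjm : (j:ℕ) ≤ m := by omega
        refine (ih j hjm).trans ?_
        rw [hB]
        have hp : (1 + c * CK) ^ (j:ℕ) ≤ (1 + c * CK) ^ m := pow_le_pow_right₀ hbase hjm
        exact mul_le_mul_of_nonneg_right
          (mul_le_mul_of_nonneg_left hp (le_trans zero_le_one hc1)) hεnn
      have := invLip_step hA2 hM hCK hLip hx hy hy' i hBnn hpre
      rw [h]
      calc |y i - y' i| ≤ c * (ε + CK * B) := this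
        _ ≤ c * (1 + c * CK) ^ (m+1) * ε := by
            rw [hB, pow_succ]
            have hpm : 1 ≤ (1 + c * CK) ^ m := one_le_pow₀ hbase
            have hcnn : (0:ℝ) ≤ c := le_trans zero_le_one hc1
            nlinarith [mul_nonneg (mul_nonneg hcnn (sub_nonneg.2 hpm)) hεnn]
  
lemma invLip_norm {x y y' : Fin d → ℝ} (hx : x ∈ cube d) (hy : y ∈ cube d) (hy' : y' ∈ cube d) :
    ‖y - y'‖ ≤ (M / Klow) * (1 + (M / Klow) * CK) ^ d * ‖Ros κ x y - Ros κ x y'‖ := by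
  have hKl : 0 < Klow := hA2.2.1
  have hMpos : 0 < M := M_pos hA2 hM
  have hc1 : 1 ≤ M / Klow := (one_le_div hKl).2 (Klow_le_M hA2 hM)
  have hbase : 1 ≤ 1 + (M / Klow) * CK := by nlinarith
  have hnn : 0 ≤ (M / Klow) * (1 + (M / Klow) * CK) ^ d * ‖Ros κ x y - Ros κ x y'‖ := by
    positivity
  refine (pi_norm_le_iff_of_nonneg hnn).2 (fun i => ?_)
  rw [Pi.sub_apply, Real.norm_eq_abs]
  refine (invLip hA2 hM hCK hLip hx hy hy' i).trans ?_
  have hpow : (1 + (M / Klow) * CK) ^ (i:ℕ) ≤ (1 + (M / Klow) * CK) ^ d :=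
    pow_le_pow_right₀ hbase i.isLt.le
  have hεnn : (0:ℝ) ≤ ‖Ros κ x y - Ros κ x y'‖ := norm_nonneg _
  have hcnn : (0:ℝ) ≤ M / Klow := le_trans zero_le_one hc1
  exact mul_le_mul_of_nonneg_right (mul_le_mul_of_nonneg_left hpow hcnn) hεnn

end G

section H

lemma card_filter_val_lt {d rr : ℕ} (h : rr < d) :
    (Finset.univ.filter fun j : Fin d => (j:ℕ) < rr).card = rr := by
  have heq : (Finset.univ.filter fun j : Fin d => (j:ℕ) < rr) = Finset.Iio ⟨rr, h⟩ := by
    ext j; simp [Fin.lt_def]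
  rw [heq, Fin.card_Iio]

lemma near_box {b : ℕ} (hb : 2 ≤ b) {e c : ℕ} {w v : ℝ} (hv : v ∈ Icc (0:ℝ) 1)
    (hc : c = min (Nat.floor (v * (b:ℝ)^e)) (b^e - 1))
    (hw1 : (c:ℝ)/(b:ℝ)^e ≤ w) (hw2 : w < ((c:ℝ)+1)/(b:ℝ)^e) :
    |w - v| ≤ 1/(b:ℝ)^e := by
  have hbpos : (0:ℝ) < (b:ℝ)^e := by positivity
  have hnn : 0 ≤ v * (b:ℝ)^e := mul_nonneg hv.1 hbpos.le
  have hvlb : (c:ℝ)/(b:ℝ)^e ≤ v := by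
    rw [div_le_iff₀ hbpos]
    calc (c:ℝ) ≤ (Nat.floor (v * (b:ℝ)^e) : ℝ) := by
          exact_mod_cast hc ▸ Nat.min_le_left _ _
      _ ≤ v * (b:ℝ)^e := Nat.floor_le hnn
  have hvub : v ≤ ((c:ℝ)+1)/(b:ℝ)^e := by
    rcases le_or_gt (Nat.floor (v * (b:ℝ)^e)) (b^e - 1) with hfl | hfl
    · have hceq : c = Nat.floor (v * (b:ℝ)^e) := by rw [hc, min_eq_left hfl]
      rw [le_div_iff₀ hbpos, hceq]
      have := Nat.lt_floor_add_one (v * (b:ℝ)^e)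
      push_cast
      linarith
    · have hceq : c = b^e - 1 := by rw [hc, min_eq_right hfl.le]
      have hb1 : 1 ≤ b^e := Nat.one_le_pow _ _ (by omega)
      have : ((c:ℝ)+1) = (b:ℝ)^e := by
        rw [hceq]
        push_cast [Nat.cast_sub hb1]
        ring
      rw [this, div_self (ne_of_gt hbpos)]
      exact hv.2
  have key : ((c:ℝ)+1)/(b:ℝ)^e - (c:ℝ)/(b:ℝ)^e = 1/(b:ℝ)^e := by
    ring
  rw [abs_sub_le_iff]
  constructor <;> linarith

end H

end DispersionAux


/-- **Dispersion rate corollary.** Under (A1)-(A2) and a Lipschitz Rosenblatt transform, the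
dispersion `d_X(k, x̃)` is `O(b^{-k/d})`, uniformly in `x̃ ∈ X`. -/
theorem dispersion_rate
    {d b t : ℕ} (hd : 0 < d) (hb : 2 ≤ b)
    (u : ℕ → Fin d → ℝ) (hu : IsTSeq b t u)
    (κ : (Fin d → ℝ) → (Fin d → ℝ) → ℝ) (hκ : IsMarkovDensity κ)
    (hA1 : A1 κ) (Klow : ℝ) (hA2 : A2 κ Klow)
    (G : (Fin d → ℝ) → (Fin d → ℝ) → (Fin d → ℝ)) (hG : IsInvRos κ G)
    (CK : ℝ) (hCK : 0 < CK)
    (hLip : ∀ x ∈ cube d, ∀ y ∈ cube d, ∀ x' ∈ cube d, ∀ y' ∈ cube d,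
      ‖Ros κ x y - Ros κ x' y'‖ ≤ CK * max ‖x - x'‖ ‖y - y'‖) :
    ∃ C : ℝ, ∃ k0 : ℕ, ∀ k : ℕ, k0 ≤ k →
      ∀ xt ∈ cube d, ∀ xx ∈ cube d, ∃ n : ℕ, n < b ^ k ∧
        ‖G xt (u n) - xx‖ ≤ C * (b : ℝ) ^ (-(k : ℝ) / (d : ℝ)) := by
  classical
  -- upper bound on κ
  obtain ⟨M, hM'⟩ := (isCompact_cube.prod isCompact_cube).exists_bound_of_continuousOn hA2.1
  have hM : ∀ x ∈ cube d, ∀ y ∈ cube d, κ x y ≤ M := by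
    intro x hx y hy
    exact (le_abs_self _).trans (le_of_eq_of_le (Real.norm_eq_abs _).symm (hM' (x, y) ⟨hx, hy⟩))
  have hKl : 0 < Klow := hA2.2.1
  have hMpos : 0 < M := M_pos hA2 hM
  set Cinv : ℝ := (M / Klow) * (1 + (M / Klow) * CK) ^ d with hCinv
  have hCinvnn : 0 ≤ Cinv := by
    have hc1 : 1 ≤ M / Klow := (one_le_div hKl).2 (Klow_le_M hA2 hM)
    positivity
  have hbR : (1:ℝ) ≤ (b:ℝ) := by exact_mod_cast Nat.one_le_of_lt hb
  have hbpos : (0:ℝ) < (b:ℝ) := lt_of_lt_of_le zero_lt_one hbR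
  refine ⟨Cinv * (b:ℝ) ^ (((t:ℝ) + (d:ℝ)) / (d:ℝ)), t, fun k hk xt hxt xx hxx => ?_⟩
  set q := (k - t) / d with hq
  set rr := (k - t) % d with hrr
  have hrrd : rr < d := Nat.mod_lt _ hd
  set e : Fin d → ℕ := fun j => if (j:ℕ) < rr then q + 1 else q with he
  have hsum : (∑ j, e j) = k - t := by
    have h1 : ∀ j : Fin d, e j = q + if (j:ℕ) < rr then 1 else 0 := by
      intro j; by_cases h : (j:ℕ) < rr <;> simp [he, h]
    calc (∑ j, e j) = ∑ j : Fin d, (q + if (j:ℕ) < rr then 1 else 0) :=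
          Finset.sum_congr rfl (fun j _ => h1 j)
      _ = d * q + rr := by
          rw [Finset.sum_add_distrib, Finset.sum_const, Finset.sum_boole, card_filter_val_lt hrrd]
          simp [mul_comm]
      _ = k - t := Nat.div_add_mod _ _
  set v : Fin d → ℝ := Ros κ xt xx with hv
  have hvm : ∀ j, v j ∈ Icc (0:ℝ) 1 := fun j => Ros_mem hA2 hM hxt hxx j
  set c : Fin d → ℕ := fun j => min (Nat.floor (v j * (b:ℝ) ^ (e j))) (b ^ (e j) - 1) with hcdef
  have hclt : ∀ j, c j < b ^ (e j) := by
    intro j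
    exact lt_of_le_of_lt (Nat.min_le_right _ _)
      (Nat.sub_lt (Nat.pow_pos (by omega)) one_pos)
  have hnet := hu.2 0 k hk e c hclt hsum
  have hpos : 0 < ((Finset.Ico (0 * b ^ k) (0 * b ^ k + b ^ k)).filter
      (fun n => inBaryBox b e c (u n))).card := by
    rw [hnet]; exact Nat.pow_pos (by omega)
  obtain ⟨n, hn⟩ := Finset.card_pos.1 hpos
  rw [Finset.mem_filter, Finset.mem_Ico] at hn
  have hnlt : n < b ^ k := by omega
  refine ⟨n, hnlt, ?_⟩
  -- coordinatewise distance bound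
  have hbox : inBaryBox b e c (u n) := hn.2
  have hqle : ∀ j, q ≤ e j := by intro j; by_cases h : (j:ℕ) < rr <;> simp [he, h]
  have hcoord : ∀ j, |u n j - v j| ≤ 1 / (b:ℝ) ^ q := by
    intro j
    refine (near_box hb (hvm j) rfl (hbox j).1 (hbox j).2).trans ?_
    have h1 : (b:ℝ) ^ q ≤ (b:ℝ) ^ (e j) := pow_le_pow_right₀ hbR (hqle j)
    have h2 : (0:ℝ) < (b:ℝ) ^ q := by positivity
    exact one_div_le_one_div_of_le h2 h1
  have hunorm : ‖u n - v‖ ≤ 1 / (b:ℝ) ^ q := by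
    have hnn : (0:ℝ) ≤ 1 / (b:ℝ) ^ q := by positivity
    refine (pi_norm_le_iff_of_nonneg hnn).2 (fun j => ?_)
    rw [Pi.sub_apply, Real.norm_eq_abs]
    exact hcoord j
  -- inverse Lipschitz
  have humem : ∀ i, u n i ∈ Icc (0:ℝ) 1 := fun i => ⟨(hu.1 n i).1, (hu.1 n i).2.le⟩
  obtain ⟨hGmem, hGRos⟩ := hG xt hxt (u n) humem
  have hinv := invLip_norm hA2 hM hCK hLip hxt hGmem hxx
  rw [hGRos] at hinv
  have hmain : ‖G xt (u n) - xx‖ ≤ Cinv * (1 / (b:ℝ) ^ q) := by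
    refine hinv.trans ?_
    exact mul_le_mul_of_nonneg_left hunorm hCinvnn
  refine hmain.trans ?_
  -- power comparison
  have hqpow : (1:ℝ) / (b:ℝ) ^ q = (b:ℝ) ^ (-(q:ℝ)) := by
    rw [Real.rpow_neg hbpos.le, Real.rpow_natCast, one_div]
  have hexp : -(q:ℝ) ≤ ((t:ℝ) + (d:ℝ)) / (d:ℝ) + (-(k:ℝ) / (d:ℝ)) := by
    have hkt : (k - t : ℕ) = d * q + rr := (Nat.div_add_mod _ _).symm
    have hktR : (k:ℝ) - (t:ℝ) = (d:ℝ) * (q:ℝ) + (rr:ℝ) := by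
      have := congrArg (fun m : ℕ => (m:ℝ)) hkt
      push_cast [Nat.cast_sub hk] at this
      linarith [this]
    have hdpos : (0:ℝ) < (d:ℝ) := by exact_mod_cast hd
    have hrrR : (rr:ℝ) < (d:ℝ) := by exact_mod_cast hrrd
    rw [← add_div, le_div_iff₀ hdpos]
    nlinarith
  have hle : (b:ℝ) ^ (-(q:ℝ)) ≤ (b:ℝ) ^ (((t:ℝ) + (d:ℝ)) / (d:ℝ) + (-(k:ℝ) / (d:ℝ))) :=
    Real.rpow_le_rpow_of_exponent_le hbR hexp
  rw [Real.rpow_add hbpos] at hle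
  rw [hqpow]
  calc Cinv * (b:ℝ) ^ (-(q:ℝ))
      ≤ Cinv * ((b:ℝ) ^ (((t:ℝ) + (d:ℝ)) / (d:ℝ)) * (b:ℝ) ^ (-(k:ℝ) / (d:ℝ))) :=
        mul_le_mul_of_nonneg_left hle hCinvnn
    _ = Cinv * (b:ℝ) ^ (((t:ℝ) + (d:ℝ)) / (d:ℝ)) * (b:ℝ) ^ (-(k:ℝ) / (d:ℝ)) := by ring
end

section
/- Let X ⊆ ℝ^d, φ : X → ℝ, (T_n)_{n≥1} positive reals, and let (x^n)_{n≥0} and (y^n)_{n≥1} be sequences in X satisfying the Metropolis update x^n = y^n if v^n ≤ exp((φ(y^n) − φ(x^{n−1}))/T_n) and x^n = x^{n−1} otherwise, where (v^n)_{n≥0} is a (0,1)-sequence in base b ≥ 2 with v^0 = 0. Then, for every n ≥ 1, if φ(y^n) < φ(x^{n−1}) − T_n k_n log b then x^n = x^{n−1} (the candidate y^n is rejected), where k_n is the smallest integer k with n < b^k. -/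
open MeasureTheory ProbabilityTheory Set Filter
open scoped Classical

/-- **Lemma 4 (automatic rejection).** In the Metropolis step driven by a `(0,1)`-sequence
`(v^n)` in base `b` with `v^0 = 0`, the candidate `y^n` is rejected as soon as
`φ(y^n) < φ(x^{n-1}) - T_n k_n log b`, where `k_n` is the smallest `k` with `n < b^k`. -/
theorem candidate_rejected_below_threshold
    {d b : ℕ} (hb : 2 ≤ b) (X : Set (Fin d → ℝ))
    (φ : (Fin d → ℝ) → ℝ) (T : ℕ → ℝ) (hT_pos : ∀ n, 0 < T n)
    (v : ℕ → ℝ) (hv : IsTSeq1 b 0 v) (hv0 : v 0 = 0)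
    (x y : ℕ → Fin d → ℝ) (hxX : ∀ n, x n ∈ X) (hyX : ∀ n, 1 ≤ n → y n ∈ X)
    (hupd : ∀ n : ℕ, x (n + 1) =
      if v (n + 1) ≤ Real.exp ((φ (y (n + 1)) - φ (x n)) / T (n + 1))
      then y (n + 1) else x n) :
    ∀ n : ℕ, φ (y (n + 1)) < φ (x n) - T (n + 1) * (kOf b (n + 1)) * Real.log b →
      x (n + 1) = x n := by
  intro n hφ
  have hb1 : 1 < b := by omega
  set k := kOf b (n + 1) with hk
  have hne : Set.Nonempty {j | n + 1 < b ^ j} := ⟨n + 1, Nat.lt_pow_self hb1⟩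
  have hkmem : n + 1 < b ^ k := Nat.sInf_mem hne
  have hbR : (1:ℝ) < (b:ℝ) := by exact_mod_cast hb1
  have hbpow : (0:ℝ) < (b:ℝ) ^ k := by positivity
  -- Step 1: v (n+1) ≥ 1 / b^k
  have hv1 : 1 / (b:ℝ) ^ k ≤ v (n + 1) := by
    by_contra hlt
    push_neg at hlt
    have hc := hv.2 0 k (Nat.zero_le _) 0 (by positivity)
    simp only [Nat.zero_mul, zero_add, Nat.sub_zero, Nat.cast_zero, zero_div, zero_add,
      pow_zero] at hc
    have hsub : ({0, n + 1} : Finset ℕ) ⊆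
        (Finset.Ico 0 (b ^ k)).filter
          (fun m => (0:ℝ) ≤ v m ∧ v m < 1 / (b:ℝ) ^ k) := by
      intro m hm
      simp only [Finset.mem_insert, Finset.mem_singleton] at hm
      rcases hm with rfl | rfl
      · simp only [Finset.mem_filter, Finset.mem_Ico]
        exact ⟨⟨Nat.zero_le _, by omega⟩, le_of_eq hv0.symm,
          by rw [hv0]; positivity⟩
      · simp only [Finset.mem_filter, Finset.mem_Ico]
        exact ⟨⟨Nat.zero_le _, hkmem⟩, (hv.1 (n + 1)).1, hlt⟩
    have h2 : ({0, n + 1} : Finset ℕ).card = 2 := by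
      rw [Finset.card_insert_of_notMem (by simp), Finset.card_singleton]
    have := Finset.card_le_card hsub
    omega
  -- Step 2: exp((φ y - φ x)/T) < 1 / b^k
  have hexp : Real.exp ((φ (y (n + 1)) - φ (x n)) / T (n + 1)) < 1 / (b:ℝ) ^ k := by
    have hT := hT_pos (n + 1)
    have harg : (φ (y (n + 1)) - φ (x n)) / T (n + 1) < -(k * Real.log b) := by
      rw [div_lt_iff₀ hT] at *
      nlinarith [hφ]
    calc Real.exp ((φ (y (n + 1)) - φ (x n)) / T (n + 1))
        < Real.exp (-(k * Real.log b)) := Real.exp_lt_exp.mpr harg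
      _ = 1 / (b:ℝ) ^ k := by
          rw [Real.exp_neg, Real.exp_nat_mul, Real.exp_log (by linarith)]
          rw [one_div]
  rw [hupd n, if_neg (not_le.mpr (lt_of_lt_of_le hexp hv1))]
end
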